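/- Consider the planar system x' = √(3/2) y², y' = -√(3/2) xy (the restriction of the compactified power-law quintessence system to the invariant plane z = 1). Then: (i) the quantity x² + y² is a first integral, i.e. it is constant along every solution, so all orbits lie on circles x² + y² = A²; (ii) for every A > 0 and every η₀ ∈ ℝ, the pair of functions x(η) = A·tanh(A√(3/2)(η-η₀)), y(η) = A·sech(A√(3/2)(η-η₀)) is a solution of the system, lying on the circle x² + y² = A². -/

import Mathlib

lemma aux_hasDerivAt_tanh (t : ℝ) :
    HasDerivAt Real.tanh (1 / Real.cosh t ^ 2) t := by
  have h : HasDerivAt (fun s => Real.sinh s / Real.cosh s)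
      ((Real.cosh t * Real.cosh t - Real.sinh t * Real.sinh t) / Real.cosh t ^ 2) t :=
    (Real.hasDerivAt_sinh t).div (Real.hasDerivAt_cosh t) (Real.cosh_pos t).ne'
  have e : Real.cosh t * Real.cosh t - Real.sinh t * Real.sinh t = 1 := by
    have := Real.cosh_sq_sub_sinh_sq t; nlinarith [this]
  rw [e] at h
  exact h.congr_of_eventuallyEq (Filter.Eventually.of_forall fun s =>
    (Real.tanh_eq_sinh_div_cosh s))

/-- On the invariant plane `z = 1` of the compactified power-law quintessence system,
`x' = √(3/2) y²`, `y' = -√(3/2) x y`: the quantity `x² + y²` is a first integral (all orbits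
lie on circles), and for every `A > 0`, `η₀`, the pair
`x(η) = A tanh(A√(3/2)(η-η₀))`, `y(η) = A sech(A√(3/2)(η-η₀))` is a solution lying on the
circle `x² + y² = A²`. -/
theorem power_law_z1_plane_solutions :
    (∀ x y : ℝ → ℝ,
      (∀ η : ℝ, HasDerivAt x (Real.sqrt (3 / 2) * (y η) ^ 2) η) →
      (∀ η : ℝ, HasDerivAt y (-Real.sqrt (3 / 2) * x η * y η) η) →
      ∀ η₁ η₂ : ℝ, (x η₁) ^ 2 + (y η₁) ^ 2 = (x η₂) ^ 2 + (y η₂) ^ 2) ∧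
    (∀ A η₀ : ℝ, 0 < A →
      (∀ η : ℝ,
        HasDerivAt (fun s => A * Real.tanh (A * Real.sqrt (3 / 2) * (s - η₀)))
          (Real.sqrt (3 / 2) * (A / Real.cosh (A * Real.sqrt (3 / 2) * (η - η₀))) ^ 2) η) ∧
      (∀ η : ℝ,
        HasDerivAt (fun s => A / Real.cosh (A * Real.sqrt (3 / 2) * (s - η₀)))
          (-Real.sqrt (3 / 2) * (A * Real.tanh (A * Real.sqrt (3 / 2) * (η - η₀)))
            * (A / Real.cosh (A * Real.sqrt (3 / 2) * (η - η₀)))) η) ∧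
      (∀ η : ℝ,
        (A * Real.tanh (A * Real.sqrt (3 / 2) * (η - η₀))) ^ 2
          + (A / Real.cosh (A * Real.sqrt (3 / 2) * (η - η₀))) ^ 2 = A ^ 2)) := by
  constructor
  · intro x y hx hy η₁ η₂
    have key : ∀ η : ℝ, HasDerivAt (fun s => x s ^ 2 + y s ^ 2) 0 η := by
      intro η
      have h := ((hx η).pow 2).add ((hy η).pow 2)
      have e : (2 : ℕ) * x η ^ (2 - 1) * (Real.sqrt (3 / 2) * y η ^ 2)
          + (2 : ℕ) * y η ^ (2 - 1) * (-Real.sqrt (3 / 2) * x η * y η) = 0 := by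
        push_cast; ring
      rwa [e] at h
    have hc : ∀ η : ℝ, x η ^ 2 + y η ^ 2 = x 0 ^ 2 + y 0 ^ 2 := by
      intro η
      have hd : ∀ s, deriv (fun s => x s ^ 2 + y s ^ 2) s = 0 := fun s => (key s).deriv
      exact is_const_of_deriv_eq_zero (fun s => (key s).differentiableAt) hd η 0
    rw [hc η₁, hc η₂]
  · intro A η₀ hA
    have hu : ∀ η : ℝ, HasDerivAt (fun s => A * Real.sqrt (3 / 2) * (s - η₀))
        (A * Real.sqrt (3 / 2)) η := by
      intro η
      simpa using ((hasDerivAt_id η).sub_const η₀).const_mul (A * Real.sqrt (3 / 2))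
    have hcpos : ∀ η : ℝ, 0 < Real.cosh (A * Real.sqrt (3 / 2) * (η - η₀)) :=
      fun η => Real.cosh_pos _
    refine ⟨?_, ?_, ?_⟩
    · intro η
      have h := ((aux_hasDerivAt_tanh _).comp η (hu η)).const_mul A
      have e : A * (1 / Real.cosh (A * Real.sqrt (3 / 2) * (η - η₀)) ^ 2
          * (A * Real.sqrt (3 / 2)))
          = Real.sqrt (3 / 2) * (A / Real.cosh (A * Real.sqrt (3 / 2) * (η - η₀))) ^ 2 := by
        field_simp
      rwa [e] at h
    · intro η
      set c := A * Real.sqrt (3 / 2) * (η - η₀) with hc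
      have h := ((((Real.hasDerivAt_cosh c).comp η (hu η)).inv (show (Real.cosh ∘ fun s => A * Real.sqrt (3 / 2) * (s - η₀)) η ≠ 0 from (hcpos η).ne')).const_mul A)
      simp only [Function.comp] at h
      have hfun : (fun s : ℝ => A / Real.cosh (A * Real.sqrt (3 / 2) * (s - η₀)))
          = fun s => A * (Real.cosh (A * Real.sqrt (3 / 2) * (s - η₀)))⁻¹ := by
        funext s; exact div_eq_mul_inv _ _
      rw [hfun]
      convert h using 1
      · rfl
      · rfl
      · rfl
      rw [Real.tanh_eq_sinh_div_cosh]
      have key : ∀ q S C : ℝ, C ≠ 0 →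
          -q * (A * (S / C)) * (A / C) = A * (-(S * (A * q)) / C ^ 2) := by
        intro q S C hC; field_simp
      exact key _ (Real.sinh c) (Real.cosh c) (Real.cosh_pos c).ne'
    · intro η
      set c := A * Real.sqrt (3 / 2) * (η - η₀)
      rw [Real.tanh_eq_sinh_div_cosh]
      have h1 := Real.cosh_sq_sub_sinh_sq c
      have h2 := (hcpos η).ne'
      field_simp
      nlinarith [h1]
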